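/- Suppose for each integer N ≥ 2 there is a nonnegative continuous function E_N on [0,∞) satisfying E_2(t) ≤ B for all t, and for N ≥ 3: E_N(t) ≤ E_N(0) + ∫₀ᵗ C₀(N−1) h(s) E_N(s) ds + ∫₀ᵗ C N B² A^{N−1} exp(C₀(N−1) H(s)) (1 + C₁ B s)^{N−3} ds, where h ≥ 0 is continuous, H(t) = ∫₀ᵗ h, E_N(0) ≤ B A^{N−1}, A ≥ 1, B > 0, C₁ = 3C, and C₀ ≥ C > 0. Then for every N ≥ 2 and t ≥ 0, E_N(t) ≤ 2 B A^{N−1} exp(C₀(N−1) H(t)) (1 + C₁ B t)^{N−2}. -/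

import Mathlib

open intervalIntegral

lemma primitive_hasDerivAt (f : ℝ → ℝ) (hf : Continuous f) (t : ℝ) :
    HasDerivAt (fun x => ∫ s in (0:ℝ)..x, f s) (f t) t :=
  intervalIntegral.integral_hasDerivAt_right (hf.intervalIntegrable 0 t)
    (hf.stronglyMeasurable.stronglyMeasurableAtFilter) hf.continuousAt

lemma primitive_continuous (f : ℝ → ℝ) (hf : Continuous f) :
    Continuous (fun x => ∫ s in (0:ℝ)..x, f s) :=
  Differentiable.continuous (fun t => (primitive_hasDerivAt f hf t).differentiableAt)

lemma gronwall_aux (a g u : ℝ → ℝ) (ha : Continuous a) (ha0 : ∀ t, 0 ≤ a t)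
    (hg : Continuous g) (hu : Continuous u)
    (hle : ∀ t, 0 ≤ t → u t ≤ u 0 + (∫ s in (0:ℝ)..t, a s * u s) + ∫ s in (0:ℝ)..t, g s) :
    ∀ t, 0 ≤ t → u t ≤
      (u 0 + ∫ s in (0:ℝ)..t, g s * Real.exp (-∫ r in (0:ℝ)..s, a r)) *
        Real.exp (∫ s in (0:ℝ)..t, a s) := by
  set IA : ℝ → ℝ := fun x => ∫ s in (0:ℝ)..x, a s with hIAdef
  set φ : ℝ → ℝ := fun x => u 0 + (∫ s in (0:ℝ)..x, a s * u s) + ∫ s in (0:ℝ)..x, g s with hφdef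
  have hIA : ∀ t, HasDerivAt IA (a t) t := primitive_hasDerivAt a ha
  have hIAc : Continuous IA := primitive_continuous a ha
  have hge : Continuous (fun s => g s * Real.exp (-(IA s))) :=
    hg.mul (Real.continuous_exp.comp hIAc.neg)
  have hφ : ∀ t, HasDerivAt φ (a t * u t + g t) t := by
    intro t
    have h1 := primitive_hasDerivAt _ (ha.mul hu) t
    have h2 := primitive_hasDerivAt g hg t
    exact ((h1.const_add (u 0)).add h2)
  set ψ : ℝ → ℝ := fun x => φ x * Real.exp (-(IA x)) -
      ∫ s in (0:ℝ)..x, g s * Real.exp (-(IA s)) with hψdef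
  have hψ : ∀ t, HasDerivAt ψ
      ((a t * u t + g t) * Real.exp (-(IA t)) + φ t * (Real.exp (-(IA t)) * (-(a t))) -
        g t * Real.exp (-(IA t))) t := by
    intro t
    exact ((hφ t).mul (((hIA t).neg).exp)).sub (primitive_hasDerivAt _ hge t)
  have hψdiff : Differentiable ℝ ψ := fun t => (hψ t).differentiableAt
  have hanti : AntitoneOn ψ (Set.Ici (0:ℝ)) := by
    apply antitoneOn_of_deriv_nonpos (convex_Ici 0) hψdiff.continuous.continuousOn
      hψdiff.differentiableOn
    intro x hx
    rw [interior_Ici] at hx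
    rw [(hψ x).deriv]
    have hux : u x ≤ φ x := by
      have := hle x (le_of_lt hx)
      simpa [hφdef] using this
    have h1 : 0 ≤ a x * Real.exp (-(IA x)) :=
      mul_nonneg (ha0 x) (Real.exp_pos _).le
    nlinarith [mul_nonneg h1 (sub_nonneg.2 hux)]
  intro t ht
  have hψt : ψ t ≤ ψ 0 := hanti Set.self_mem_Ici ht ht
  have hψ0 : ψ 0 = u 0 := by
    simp [hψdef, hφdef, hIAdef, intervalIntegral.integral_same]
  have key : φ t * Real.exp (-(IA t)) ≤
      u 0 + ∫ s in (0:ℝ)..t, g s * Real.exp (-(IA s)) := by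
    have := hψt
    rw [hψ0] at this
    simp only [hψdef] at this
    linarith
  have hexp : (0:ℝ) < Real.exp (IA t) := Real.exp_pos _
  have hφt : φ t ≤ (u 0 + ∫ s in (0:ℝ)..t, g s * Real.exp (-(IA s))) * Real.exp (IA t) := by
    have h2 := mul_le_mul_of_nonneg_right key hexp.le
    rw [mul_assoc, ← Real.exp_add] at h2
    simpa using h2
  calc u t ≤ φ t := by simpa [hφdef] using hle t ht
    _ ≤ _ := hφt

set_option maxHeartbeats 1600000 in
/-- Abstract inductive energy estimate: under the recursive integral inequalities,
`E_N(t) ≤ 2 B A^{N-1} exp(C₀(N-1)H(t)) (1+C₁Bt)^{N-2}` for all `N ≥ 2`, `t ≥ 0`. -/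
theorem stmt9 (A B C C₀ C₁ : ℝ) (hA : 1 ≤ A) (hB : 0 < B) (hC : 0 < C)
    (hCC₀ : C ≤ C₀) (hC₁ : C₁ = 3 * C)
    (h : ℝ → ℝ) (hh : Continuous h) (hh0 : ∀ t, 0 ≤ h t)
    (E : ℕ → ℝ → ℝ)
    (hEcont : ∀ N, Continuous (E N))
    (hE0 : ∀ N t, 0 ≤ t → 0 ≤ E N t)
    (hE2 : ∀ t, 0 ≤ t → E 2 t ≤ B)
    (hEinit : ∀ N, 2 ≤ N → E N 0 ≤ B * A ^ (N - 1))
    (hind : ∀ N, 3 ≤ N → ∀ t, 0 ≤ t →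
      E N t ≤ E N 0 + (∫ s in (0 : ℝ)..t, C₀ * ((N : ℝ) - 1) * h s * E N s) +
        ∫ s in (0 : ℝ)..t,
          C * (N : ℝ) * B ^ 2 * A ^ (N - 1) *
            Real.exp (C₀ * ((N : ℝ) - 1) * ∫ r in (0 : ℝ)..s, h r) *
            (1 + C₁ * B * s) ^ (N - 3)) :
    ∀ N, 2 ≤ N → ∀ t, 0 ≤ t →
      E N t ≤ 2 * B * A ^ (N - 1) *
        Real.exp (C₀ * ((N : ℝ) - 1) * ∫ s in (0 : ℝ)..t, h s) *
        (1 + C₁ * B * t) ^ (N - 2) := by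
  have hC₀ : 0 < C₀ := lt_of_lt_of_le hC hCC₀
  have hC₁pos : 0 < C₁ := by rw [hC₁]; linarith
  intro N hN t ht
  have hHnn : 0 ≤ ∫ s in (0:ℝ)..t, h s :=
    intervalIntegral.integral_nonneg ht (fun s _ => hh0 s)
  have hbase : (1:ℝ) ≤ 1 + C₁ * B * t := by nlinarith [mul_nonneg (mul_nonneg hC₁pos.le hB.le) ht]
  rcases Nat.lt_or_ge N 3 with hN2 | hN3
  · -- N = 2
    have hN2' : N = 2 := by omega
    subst hN2'
    have h1 : E 2 t ≤ B := hE2 t ht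
    have hexp : (1:ℝ) ≤ Real.exp (C₀ * ((2 : ℕ) - 1 : ℝ) * ∫ s in (0:ℝ)..t, h s) := by
      apply Real.one_le_exp
      norm_num
      positivity
    norm_num at hexp ⊢
    have he : (1:ℝ) ≤ Real.exp (C₀ * ∫ s in (0:ℝ)..t, h s) := Real.one_le_exp hexp
    nlinarith [mul_le_mul_of_nonneg_left he (by positivity : (0:ℝ) ≤ 2 * B * A)]
  · -- N ≥ 3
    obtain ⟨m, rfl⟩ : ∃ m, N = m + 3 := ⟨N - 3, by omega⟩
    have e1 : m + 3 - 1 = m + 2 := by omega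
    have e2 : m + 3 - 2 = m + 1 := by omega
    have e3 : m + 3 - 3 = m := by omega
    have hm1 : (0:ℝ) < (m:ℝ) + 1 := by positivity
    have hcast : (((m + 3 : ℕ)) : ℝ) = (m:ℝ) + 3 := by push_cast; ring
    have haFc : Continuous (fun s => C₀ * (((m + 3 : ℕ) : ℝ) - 1) * h s) :=
      continuous_const.mul hh
    have haF0 : ∀ s, 0 ≤ C₀ * (((m + 3 : ℕ) : ℝ) - 1) * h s := by
      intro s
      apply mul_nonneg (mul_nonneg hC₀.le _) (hh0 s)
      rw [hcast]; linarith
    have hgc : Continuous (fun s => C * ((m + 3 : ℕ) : ℝ) * B ^ 2 * A ^ (m + 2) *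
        Real.exp (C₀ * (((m + 3 : ℕ) : ℝ) - 1) * ∫ r in (0:ℝ)..s, h r) *
        (1 + C₁ * B * s) ^ m) := by
      refine Continuous.mul (Continuous.mul continuous_const ?_) ?_
      · exact Real.continuous_exp.comp (continuous_const.mul (primitive_continuous h hh))
      · exact (continuous_const.add (continuous_const.mul continuous_id)).pow m
    have hle : ∀ τ, 0 ≤ τ → E (m + 3) τ ≤ E (m + 3) 0 +
        (∫ s in (0:ℝ)..τ, (C₀ * (((m + 3 : ℕ) : ℝ) - 1) * h s) * E (m + 3) s) +
        ∫ s in (0:ℝ)..τ, C * ((m + 3 : ℕ) : ℝ) * B ^ 2 * A ^ (m + 2) *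
          Real.exp (C₀ * (((m + 3 : ℕ) : ℝ) - 1) * ∫ r in (0:ℝ)..s, h r) *
          (1 + C₁ * B * s) ^ m := by
      intro τ hτ
      have := hind (m + 3) (by omega) τ hτ
      rw [e1, e3] at this
      exact this
    have key := gronwall_aux (fun s => C₀ * (((m + 3 : ℕ) : ℝ) - 1) * h s)
      (fun s => C * ((m + 3 : ℕ) : ℝ) * B ^ 2 * A ^ (m + 2) *
        Real.exp (C₀ * (((m + 3 : ℕ) : ℝ) - 1) * ∫ r in (0:ℝ)..s, h r) *
        (1 + C₁ * B * s) ^ m)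
      (E (m + 3)) haFc haF0 hgc (hEcont _) hle t ht
    have hIAeq : ∀ τ : ℝ, (∫ s in (0:ℝ)..τ, C₀ * (((m + 3 : ℕ) : ℝ) - 1) * h s) =
        C₀ * (((m + 3 : ℕ) : ℝ) - 1) * ∫ s in (0:ℝ)..τ, h s := fun τ =>
      intervalIntegral.integral_const_mul _ _
    -- simplify the inner integrand
    have hinteq : (∫ s in (0:ℝ)..t,
        (C * ((m + 3 : ℕ) : ℝ) * B ^ 2 * A ^ (m + 2) *
          Real.exp (C₀ * (((m + 3 : ℕ) : ℝ) - 1) * ∫ r in (0:ℝ)..s, h r) *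
          (1 + C₁ * B * s) ^ m) *
          Real.exp (-∫ r in (0:ℝ)..s, C₀ * (((m + 3 : ℕ) : ℝ) - 1) * h r)) =
        ∫ s in (0:ℝ)..t, C * ((m + 3 : ℕ) : ℝ) * B ^ 2 * A ^ (m + 2) *
          (1 + C₁ * B * s) ^ m := by
      apply intervalIntegral.integral_congr
      intro s _
      beta_reduce
      rw [hIAeq s, Real.exp_neg]
      have hne : Real.exp (C₀ * (((m + 3 : ℕ) : ℝ) - 1) * ∫ r in (0:ℝ)..s, h r) ≠ 0 :=
        Real.exp_ne_zero _
      field_simp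
    have hpow : (∫ s in (0:ℝ)..t, (1 + C₁ * B * s) ^ m) =
        ((1 + C₁ * B * t) ^ (m + 1) - 1) / (C₁ * B * ((m:ℝ) + 1)) := by
      have hCB : (0:ℝ) < C₁ * B := by positivity
      have hder : ∀ s ∈ Set.uIcc (0:ℝ) t,
          HasDerivAt (fun x => (1 + C₁ * B * x) ^ (m + 1) / (C₁ * B * ((m:ℝ) + 1)))
            ((1 + C₁ * B * s) ^ m) s := by
        intro s _
        have h1 : HasDerivAt (fun x : ℝ => 1 + C₁ * B * x) (C₁ * B) s := by
          simpa using ((hasDerivAt_id s).const_mul (C₁ * B)).const_add 1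
        have h2 := (h1.pow (m + 1)).div_const (C₁ * B * ((m:ℝ) + 1))
        refine h2.congr_deriv ?_
        simp only [Nat.add_sub_cancel]
        push_cast
        field_simp
      rw [intervalIntegral.integral_eq_sub_of_hasDerivAt hder
        (((continuous_const.add (continuous_const.mul continuous_id)).pow
          m).intervalIntegrable 0 t)]
      norm_num
      field_simp
    beta_reduce at key
    rw [hinteq, intervalIntegral.integral_const_mul, hpow, hIAeq] at key
    rw [e1, e2]
    have hEi : E (m + 3) 0 ≤ B * A ^ (m + 2) := by
      have := hEinit (m + 3) (by omega)
      rwa [e1] at this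
    set P : ℝ := (1 + C₁ * B * t) ^ (m + 1) with hP
    set Q : ℝ := A ^ (m + 2) with hQ
    have hP1 : (1:ℝ) ≤ P := one_le_pow₀ hbase
    have hQ1 : (1:ℝ) ≤ Q := one_le_pow₀ hA
    have hfin : E (m + 3) 0 + C * ((m + 3 : ℕ) : ℝ) * B ^ 2 * Q *
        ((P - 1) / (C₁ * B * ((m:ℝ) + 1))) ≤ 2 * B * Q * P := by
      have heq : C * ((m + 3 : ℕ) : ℝ) * B ^ 2 * Q * ((P - 1) / (C₁ * B * ((m:ℝ) + 1))) =
          (((m:ℝ) + 3) / (3 * ((m:ℝ) + 1))) * (B * Q * (P - 1)) := by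
        rw [hC₁, hcast]
        field_simp
      have hfrac : ((m:ℝ) + 3) / (3 * ((m:ℝ) + 1)) ≤ 1 := by
        rw [div_le_one (by positivity)]
        linarith
      have hnn : (0:ℝ) ≤ B * Q * (P - 1) :=
        mul_nonneg (mul_nonneg hB.le (by linarith)) (by linarith)
      have hKD : C * ((m + 3 : ℕ) : ℝ) * B ^ 2 * Q * ((P - 1) / (C₁ * B * ((m:ℝ) + 1))) ≤
          B * Q * (P - 1) := by
        rw [heq]
        nlinarith [mul_le_mul_of_nonneg_right hfrac hnn]
      nlinarith [mul_nonneg (mul_nonneg hB.le (by linarith : (0:ℝ) ≤ Q)) (by linarith : (0:ℝ) ≤ P)]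
    refine le_trans key ?_
    calc (E (m + 3) 0 + C * ((m + 3 : ℕ) : ℝ) * B ^ 2 * Q *
            ((P - 1) / (C₁ * B * ((m:ℝ) + 1)))) *
          Real.exp (C₀ * (((m + 3 : ℕ) : ℝ) - 1) * ∫ s in (0:ℝ)..t, h s)
        ≤ 2 * B * Q * P * Real.exp (C₀ * (((m + 3 : ℕ) : ℝ) - 1) * ∫ s in (0:ℝ)..t, h s) :=
          mul_le_mul_of_nonneg_right hfin (Real.exp_pos _).le
      _ = 2 * B * Q * Real.exp (C₀ * (((m + 3 : ℕ) : ℝ) - 1) * ∫ s in (0:ℝ)..t, h s) * P := by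
          ring
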